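/- Let g_* ∈ (−1, 0) and f* > 0 and define t₀ = ln[(1/2)(1 − f*/g_*)] / ( ln[(1/4)(2 − f*/g_* − g_*/f*)] − ln(g_* + 1) ). If f* = M − 1 and g_* = ε − 1 with ε^{-1} = Θ(M^γ) for some γ > 0, then t₀ → 1/(γ+1) as M → ∞. Formally: with f* = M − 1 and g_* = M^{−γ} − 1, lim_{M → ∞} t₀(M) = 1/(γ+1). -/

import Mathlib

open Filter Real

theorem stmt_16 (γ : ℝ) (hγ : 0 < γ) :
    Filter.Tendsto
      (fun M : ℝ =>
        Real.log ((1/2) * (1 - (M - 1) / (M ^ (-γ) - 1))) /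
          (Real.log ((1/4) * (2 - (M - 1) / (M ^ (-γ) - 1) - (M ^ (-γ) - 1) / (M - 1))) -
            Real.log ((M ^ (-γ) - 1) + 1)))
      Filter.atTop (nhds (1 / (γ + 1))) := by
  set h₁ : ℝ → ℝ := fun M => (1/2) * (1 - (M - 1) / (M ^ (-γ) - 1)) with hh1def
  set h₂ : ℝ → ℝ := fun M => (1/4) * (2 - (M - 1) / (M ^ (-γ) - 1) - (M ^ (-γ) - 1) / (M - 1)) with hh2def
  have hrp : Tendsto (fun M : ℝ => M ^ (-γ)) atTop (nhds 0) :=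
    tendsto_rpow_neg_atTop hγ
  have hinv : Tendsto (fun M : ℝ => 1 / M) atTop (nhds 0) := by
    simpa using tendsto_inv_atTop_zero
  -- basic eventual facts
  have hev : ∀ᶠ M : ℝ in atTop, 1 < M := eventually_gt_atTop 1
  have hfacts : ∀ᶠ M : ℝ in atTop,
      0 < M ∧ 1 < M ∧ M ^ (-γ) - 1 < 0 ∧ 0 < M - 1 ∧ 0 < h₁ M ∧ 0 < h₂ M ∧ 0 < Real.log M := by
    filter_upwards [hev] with M hM
    have hM0 : 0 < M := lt_trans one_pos hM
    have hg : M ^ (-γ) - 1 < 0 := by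
      have : M ^ (-γ) < 1 := Real.rpow_lt_one_of_one_lt_of_neg hM (neg_lt_zero.mpr hγ)
      linarith
    have hM1 : 0 < M - 1 := by linarith
    have hq : (M - 1) / (M ^ (-γ) - 1) < 0 := div_neg_of_pos_of_neg hM1 hg
    have hq2 : (M ^ (-γ) - 1) / (M - 1) < 0 := div_neg_of_neg_of_pos hg hM1
    refine ⟨hM0, hM, hg, hM1, ?_, ?_, Real.log_pos hM⟩
    · simp only [hh1def]; nlinarith
    · simp only [hh2def]; nlinarith
  -- limit of (1 - 1/M)/(M^(-γ) - 1)
  have hmid : Tendsto (fun M : ℝ => (1 - 1/M) / (M ^ (-γ) - 1)) atTop (nhds (-1)) := by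
    have h1 : Tendsto (fun M : ℝ => 1 - 1/M) atTop (nhds (1 - 0)) :=
      (tendsto_const_nhds : Tendsto (fun _ : ℝ => (1:ℝ)) atTop (nhds 1)).sub hinv
    have h2 : Tendsto (fun M : ℝ => M ^ (-γ) - 1) atTop (nhds (0 - 1)) :=
      hrp.sub (tendsto_const_nhds : Tendsto (fun _ : ℝ => (1:ℝ)) atTop (nhds 1))
    have := h1.div h2 (show (0:ℝ) - 1 ≠ 0 by norm_num)
    rw [show (-1:ℝ) = (1 - 0) / (0 - 1) by norm_num]
    exact this
  have hlast : Tendsto (fun M : ℝ => (M ^ (-γ) - 1) / (M - 1) * (1/M)) atTop (nhds 0) := by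
    have h1 : Tendsto (fun M : ℝ => (M ^ (-γ) - 1) / (M - 1)) atTop (nhds 0) :=
      Tendsto.div_atTop
        (hrp.sub (tendsto_const_nhds : Tendsto (fun _ : ℝ => (1:ℝ)) atTop (nhds 1)))
        (tendsto_atTop_add_const_right _ _ tendsto_id)
    simpa using h1.mul hinv
  -- h₁ M / M → 1/2
  have h1div : Tendsto (fun M => h₁ M / M) atTop (nhds (1/2)) := by
    have heq : ∀ᶠ M : ℝ in atTop, (1/2) * (1/M - (1 - 1/M) / (M ^ (-γ) - 1)) = h₁ M / M := by
      filter_upwards [hfacts] with M ⟨hM0, hM1, hg, hM1', _⟩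
      have hgne : M ^ (-γ) - 1 ≠ 0 := ne_of_lt hg
      have hMne : M ≠ 0 := ne_of_gt hM0
      simp only [hh1def]
      rw [eq_div_iff hMne]
      field_simp
    have : Tendsto (fun M : ℝ => (1/2) * (1/M - (1 - 1/M) / (M ^ (-γ) - 1))) atTop
        (nhds ((1/2) * (0 - (-1)))) := tendsto_const_nhds.mul (hinv.sub hmid)
    refine Tendsto.congr' heq (by norm_num at this ⊢; convert this using 2 <;> norm_num)
  -- h₂ M / M → 1/4
  have h2div : Tendsto (fun M => h₂ M / M) atTop (nhds (1/4)) := by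
    have heq : ∀ᶠ M : ℝ in atTop,
        (1/4) * (2 * (1/M) - (1 - 1/M) / (M ^ (-γ) - 1) - (M ^ (-γ) - 1) / (M - 1) * (1/M))
          = h₂ M / M := by
      filter_upwards [hfacts] with M ⟨hM0, hM1, hg, hM1', _⟩
      have hgne : M ^ (-γ) - 1 ≠ 0 := ne_of_lt hg
      have hMne : M ≠ 0 := ne_of_gt hM0
      have hM1ne : M - 1 ≠ 0 := ne_of_gt hM1'
      simp only [hh2def]
      field_simp
    have : Tendsto (fun M : ℝ =>
        (1/4) * (2 * (1/M) - (1 - 1/M) / (M ^ (-γ) - 1) - (M ^ (-γ) - 1) / (M - 1) * (1/M)))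
        atTop (nhds ((1/4) * (2 * 0 - (-1) - 0))) :=
      tendsto_const_nhds.mul (((tendsto_const_nhds.mul hinv).sub hmid).sub hlast)
    refine Tendsto.congr' heq (by norm_num at this ⊢; convert this using 2 <;> norm_num)
  -- logs
  have ha : Tendsto (fun M => Real.log (h₁ M / M)) atTop (nhds (Real.log (1/2))) :=
    h1div.log (by norm_num)
  have hb : Tendsto (fun M => Real.log (h₂ M / M)) atTop (nhds (Real.log (1/4))) :=
    h2div.log (by norm_num)
  have haL : Tendsto (fun M => Real.log (h₁ M / M) / Real.log M) atTop (nhds 0) :=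
    ha.div_atTop Real.tendsto_log_atTop
  have hbL : Tendsto (fun M => Real.log (h₂ M / M) / Real.log M) atTop (nhds 0) :=
    hb.div_atTop Real.tendsto_log_atTop
  have key : Tendsto (fun M =>
      (Real.log (h₁ M / M) / Real.log M + 1) /
        (Real.log (h₂ M / M) / Real.log M + (γ + 1))) atTop (nhds ((0 + 1) / (0 + (γ + 1)))) :=
    Tendsto.div (haL.add tendsto_const_nhds) (hbL.add tendsto_const_nhds) (by positivity)
  have key' : Tendsto (fun M =>
      (Real.log (h₁ M / M) / Real.log M + 1) /
        (Real.log (h₂ M / M) / Real.log M + (γ + 1))) atTop (nhds (1 / (γ + 1))) := by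
    convert key using 2 <;> norm_num
  refine key'.congr' ?_
  filter_upwards [hfacts] with M ⟨hM0, hM1, hg, hM1', hh1, hh2, hL⟩
  have hL0 : Real.log M ≠ 0 := ne_of_gt hL
  have hlog1 : Real.log (h₁ M / M) = Real.log (h₁ M) - Real.log M :=
    Real.log_div (ne_of_gt hh1) (ne_of_gt hM0)
  have hlog2 : Real.log (h₂ M / M) = Real.log (h₂ M) - Real.log M :=
    Real.log_div (ne_of_gt hh2) (ne_of_gt hM0)
  have hlogg : Real.log ((M ^ (-γ) - 1) + 1) = -γ * Real.log M := by
    rw [show (M ^ (-γ) - 1) + 1 = M ^ (-γ) by ring, Real.log_rpow hM0]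
  rw [hlog1, hlog2]
  show (_ + 1) / _ = Real.log (h₁ M) / (Real.log (h₂ M) - Real.log ((M ^ (-γ) - 1) + 1))
  rw [hlogg]
  have e1 : (Real.log (h₁ M) - Real.log M) / Real.log M + 1 = Real.log (h₁ M) / Real.log M := by
    field_simp; ring
  have e2 : (Real.log (h₂ M) - Real.log M) / Real.log M + (γ + 1)
      = (Real.log (h₂ M) + γ * Real.log M) / Real.log M := by
    field_simp; ring
  rw [e1, e2, div_div_div_cancel_right₀ hL0]
  ring_nf
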